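/- Let r^1,...,r^k ∈ Z^n be linearly independent, L = span{r^1,...,r^k}, and let (r^1)*,...,(r^k)* ∈ L be the dual basis (i.e., ⟨r^i, (r^j)*⟩ = δ_{ij}). For i ≠ j, the vector (r^i)* − (r^j)* lies in the dual lattice (L ∩ Z^n)* if and only if every y ∈ par{r^1,...,r^k} with y = Σ_l λ_l r^l satisfies λ_i = λ_j. -/
import Mathlib


open scoped BigOperators

noncomputable section

namespace ICRPaper

/-- A real vector is integral if every coordinate is an integer. -/
def IsIntegral {n : ℕ} (x : Fin n → ℝ) : Prop := ∀ i, ∃ z : ℤ, x i = (z : ℝ)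

/-- The lattice of integer points of `ℝ^n`. -/
def intLattice (n : ℕ) : Set (Fin n → ℝ) := {x | IsIntegral x}

/-- Standard dot product on `ℝ^n`. -/
def dot {n : ℕ} (x y : Fin n → ℝ) : ℝ := ∑ i, x i * y i

/-- `pos r`: the cone of non-negative real combinations of the vectors `r i`. -/
def pos {n : ℕ} {ι : Type} [Fintype ι] (r : ι → (Fin n → ℝ)) : Set (Fin n → ℝ) :=
  {x | ∃ lam : ι → ℝ, (∀ i, 0 ≤ lam i) ∧ x = ∑ i, lam i • r i}

/-- Lattice points (w.r.t. a lattice `Λ`) in the half-open parallelepiped spanned by `r`. -/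
def parL {n : ℕ} {ι : Type} [Fintype ι] (Λ : Set (Fin n → ℝ)) (r : ι → (Fin n → ℝ)) :
    Set (Fin n → ℝ) :=
  {x | (∃ lam : ι → ℝ, (∀ i, 0 ≤ lam i ∧ lam i < 1) ∧ x = ∑ i, lam i • r i) ∧ x ∈ Λ}

/-- Integer points in the half-open parallelepiped spanned by `r`. -/
def par {n : ℕ} {ι : Type} [Fintype ι] (r : ι → (Fin n → ℝ)) : Set (Fin n → ℝ) :=
  parL (intLattice n) r

/-- `h` is a Hilbert basis element of the cone `C` with respect to the lattice `Λ`: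
a nonzero lattice vector of `C` which is not the sum of two nonzero lattice vectors of `C`. -/
def IsHilbertL {n : ℕ} (Λ : Set (Fin n → ℝ)) (C : Set (Fin n → ℝ)) (h : Fin n → ℝ) : Prop :=
  h ∈ C ∧ h ∈ Λ ∧ h ≠ 0 ∧
    ∀ a b : Fin n → ℝ, a ∈ C → b ∈ C → a ∈ Λ → b ∈ Λ → a ≠ 0 → b ≠ 0 → h ≠ a + b

/-- The integer Carathéodory rank of `C` with respect to the lattice `Λ`:
the maximum over lattice points `z ∈ C` of the minimal number of Hilbert basis
elements needed to write `z` as a non-negative integral combination. -/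
def ICRL {n : ℕ} (Λ : Set (Fin n → ℝ)) (C : Set (Fin n → ℝ)) : ℕ :=
  sSup {m : ℕ | ∃ z ∈ C, z ∈ Λ ∧
    m = sInf {k : ℕ | ∃ h : Fin k → (Fin n → ℝ), ∃ c : Fin k → ℕ,
      (∀ i, IsHilbertL Λ C (h i)) ∧ z = ∑ i, (c i : ℝ) • h i}}

/-- The integer Carathéodory rank with respect to the integer lattice `ℤ^n`. -/
def ICR {n : ℕ} (C : Set (Fin n → ℝ)) : ℕ := ICRL (intLattice n) C

/-- The lattice `L ∩ ℤ^n`, where `L` is the real span of the vectors `r i`. -/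
def latticeOf {n : ℕ} {ι : Type} [Fintype ι] (r : ι → (Fin n → ℝ)) : Set (Fin n → ℝ) :=
  {x | x ∈ Submodule.span ℝ (Set.range r) ∧ IsIntegral x}

/-- The dual lattice `Λ* = {x ∈ lin Λ : ⟨y, x⟩ ∈ ℤ for all y ∈ Λ}`. -/
def dualLattice {n : ℕ} (Λ : Set (Fin n → ℝ)) : Set (Fin n → ℝ) :=
  {x | x ∈ Submodule.span ℝ Λ ∧ ∀ y ∈ Λ, ∃ m : ℤ, dot y x = (m : ℝ)}

/-- Orthogonal projection onto the orthogonal complement of `v`. -/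
def projPerp {n : ℕ} (v : Fin n → ℝ) (x : Fin n → ℝ) : Fin n → ℝ :=
  x - (dot x v / dot v v) • v

lemma dot_sub_right {n : ℕ} (x a b : Fin n → ℝ) :
    dot x (a - b) = dot x a - dot x b := by
  simp [dot, mul_sub, Finset.sum_sub_distrib]

lemma dot_sum_left {n k : ℕ} (r : Fin k → (Fin n → ℝ)) (μ : Fin k → ℝ) (x : Fin n → ℝ) :
    dot (∑ l, μ l • r l) x = ∑ l, μ l * dot (r l) x := by
  simp only [dot, Finset.sum_apply, Pi.smul_apply, smul_eq_mul, Finset.sum_mul,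
    Finset.mul_sum]
  rw [Finset.sum_comm]
  apply Finset.sum_congr rfl
  intro l _
  apply Finset.sum_congr rfl
  intro a _
  ring

lemma dot_key {n k : ℕ} (r : Fin k → (Fin n → ℝ)) (rstar : Fin k → (Fin n → ℝ))
    (hdual : ∀ l j, dot (r l) (rstar j) = if l = j then 1 else 0)
    (μ : Fin k → ℝ) (i j : Fin k) :
    dot (∑ l, μ l • r l) (rstar i - rstar j) = μ i - μ j := by
  rw [dot_sub_right, dot_sum_left, dot_sum_left]
  simp [hdual, mul_ite]

lemma isIntegral_sum_zsmul {n k : ℕ} (r : Fin k → (Fin n → ℝ))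
    (hint : ∀ l, IsIntegral (r l)) (c : Fin k → ℤ) :
    IsIntegral (∑ l, (c l : ℝ) • r l) := by
  intro a
  have h : ∀ l, ∃ z : ℤ, (c l : ℝ) * r l a = (z : ℝ) := by
    intro l
    obtain ⟨z, hz⟩ := hint l a
    exact ⟨c l * z, by rw [hz]; push_cast; ring⟩
  choose z hz using h
  refine ⟨∑ l, z l, ?_⟩
  simp only [Finset.sum_apply, Pi.smul_apply, smul_eq_mul, hz]
  push_cast; rfl

lemma isIntegral_sub {n : ℕ} {x y : Fin n → ℝ} (hx : IsIntegral x) (hy : IsIntegral y) :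
    IsIntegral (x - y) := by
  intro a
  obtain ⟨z, hz⟩ := hx a
  obtain ⟨w, hw⟩ := hy a
  exact ⟨z - w, by simp [hz, hw]⟩

/-- `(r^i)* − (r^j)*` lies in the dual lattice `(L ∩ ℤ^n)*` iff every
integer point of the half-open parallelepiped has equal `i`-th and `j`-th coefficients. -/
theorem stmt_3 {n k : ℕ} (r : Fin k → (Fin n → ℝ))
    (hint : ∀ i, IsIntegral (r i)) (hli : LinearIndependent ℝ r)
    (rstar : Fin k → (Fin n → ℝ))
    (hspan : ∀ j, rstar j ∈ Submodule.span ℝ (Set.range r))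
    (hdual : ∀ l j, dot (r l) (rstar j) = if l = j then 1 else 0)
    (i j : Fin k) (hij : i ≠ j) :
    rstar i - rstar j ∈ dualLattice (latticeOf r) ↔
      ∀ lam : Fin k → ℝ, (∀ l, 0 ≤ lam l ∧ lam l < 1) →
        IsIntegral (∑ l, lam l • r l) → lam i = lam j := by
  constructor
  · rintro ⟨-, hd⟩ lam hlam hintg
    have hy : (∑ l, lam l • r l) ∈ latticeOf r := by
      refine ⟨Submodule.sum_mem _ fun l _ => Submodule.smul_mem _ _
        (Submodule.subset_span ⟨l, rfl⟩), hintg⟩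
    obtain ⟨m, hm⟩ := hd _ hy
    rw [dot_key r rstar hdual] at hm
    have hm0 : m = 0 := by
      have h1 : (m : ℝ) < 1 := by
        rw [← hm]
        have := (hlam i).2
        have := (hlam j).1
        linarith
      have h2 : (-1 : ℝ) < m := by
        rw [← hm]
        have := (hlam i).1
        have := (hlam j).2
        linarith
      have := Int.lt_iff_add_one_le.mp (by exact_mod_cast h1 : m < 1)
      have := Int.lt_iff_add_one_le.mp (by exact_mod_cast h2 : (-1 : ℤ) < m)
      omega
    rw [hm0] at hm
    have : lam i - lam j = 0 := by exact_mod_cast hm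
    linarith
  · intro hpar
    constructor
    · have hle : Submodule.span ℝ (Set.range r) ≤ Submodule.span ℝ (latticeOf r) := by
        rw [Submodule.span_le]
        rintro x ⟨l, rfl⟩
        exact Submodule.subset_span ⟨Submodule.subset_span ⟨l, rfl⟩, hint l⟩
      exact Submodule.sub_mem _ (hle (hspan i)) (hle (hspan j))
    · rintro y ⟨hyspan, hyint⟩
      obtain ⟨μ, hμ⟩ := (Submodule.mem_span_range_iff_exists_fun ℝ).mp hyspan
      set lam : Fin k → ℝ := fun l => Int.fract (μ l) with hlamdef
      have hsum : ∑ l, lam l • r l = y - ∑ l, ((⌊μ l⌋ : ℝ)) • r l := by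
        rw [← hμ, ← Finset.sum_sub_distrib]
        apply Finset.sum_congr rfl
        intro l _
        rw [← sub_smul]
        rfl
      have hintg : IsIntegral (∑ l, lam l • r l) := by
        rw [hsum]
        exact isIntegral_sub hyint (isIntegral_sum_zsmul r hint _)
      have heq : lam i = lam j :=
        hpar lam (fun l => ⟨Int.fract_nonneg _, Int.fract_lt_one _⟩) hintg
      refine ⟨⌊μ i⌋ - ⌊μ j⌋, ?_⟩
      rw [← hμ, dot_key r rstar hdual]
      have hi : μ i = ⌊μ i⌋ + lam i := (Int.floor_add_fract (μ i)).symm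
      have hj : μ j = ⌊μ j⌋ + lam j := (Int.floor_add_fract (μ j)).symm
      push_cast
      linarith

end ICRPaper
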